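/- The set H′ of complex 4×4 matrices which, in (1+3)×(1+3) block form, equal [[v, 0],[c, k]] with v ∈ ℝ, v ≠ 0, k ∈ K, and c ∈ ℂ³ satisfying Re c = k e₁ − v e₁, is a subgroup of GL(4, ℂ); moreover the subset H ⊆ H′ of such matrices with v > 0 is also a subgroup of GL(4, ℂ). -/

import Mathlib

open Matrix

/-- The bilinear form of the light cone: `Λ = [[0,0,−1],[0,1,0],[−1,0,0]]`. -/
def lightConeLambda : Matrix (Fin 3) (Fin 3) ℝ := !![0, 0, -1; 0, 1, 0; -1, 0, 0]

/-- The group `K = {k ∈ GL(3,ℝ) : kᵀΛk = Λ, det k = 1}`. -/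
def Kgroup : Set (Matrix (Fin 3) (Fin 3) ℝ) :=
  {k | kᵀ * lightConeLambda * k = lightConeLambda ∧ k.det = 1}

/-- The first standard basis vector of `ℝ³`. -/
def e₁ : Fin 3 → ℝ := Pi.single 0 1

/-- The set of complex 4×4 matrices in block form `[[v,0],[c,k]]` with `v ∈ ℝ`,
`k ∈ K`, and `Re c = k e₁ − v e₁`, together with the condition `P v` on `v`. -/
def frameSet (P : ℝ → Prop) : Set (Matrix (Fin 1 ⊕ Fin 3) (Fin 1 ⊕ Fin 3) ℂ) :=
  {M | ∃ (v : ℝ) (c : Fin 3 → ℂ) (k : Matrix (Fin 3) (Fin 3) ℝ),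
    P v ∧ k ∈ Kgroup ∧
    (∀ i : Fin 3, (c i).re = k.mulVec e₁ i - v * e₁ i) ∧
    M = Matrix.fromBlocks (Matrix.of fun _ _ => (v : ℂ)) 0
          (Matrix.of fun i _ => c i) (k.map (fun r => (r : ℂ)))}


lemma K_one' : (1 : Matrix (Fin 3) (Fin 3) ℝ) ∈ Kgroup := ⟨by simp [Kgroup], by simp⟩

lemma e₁_zero : e₁ 0 = 1 := by simp [e₁]
lemma e₁_one : e₁ 1 = 0 := by simp [e₁]
lemma e₁_two : e₁ 2 = 0 := by simp [e₁]

lemma K_mul' {k k' : Matrix (Fin 3) (Fin 3) ℝ} (h : k ∈ Kgroup) (h' : k' ∈ Kgroup) :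
    k * k' ∈ Kgroup := by
  obtain ⟨h1, h2⟩ := h; obtain ⟨h1', h2'⟩ := h'
  refine ⟨?_, by simp [h2, h2']⟩
  calc (k*k')ᵀ * lightConeLambda * (k*k') = k'ᵀ * (kᵀ * lightConeLambda * k) * k' := by
        simp only [transpose_mul, Matrix.mul_assoc]
    _ = lightConeLambda := by rw [h1, h1']

lemma K_inv' {k : Matrix (Fin 3) (Fin 3) ℝ} (h : k ∈ Kgroup) : k⁻¹ ∈ Kgroup := by
  obtain ⟨h1, h2⟩ := h
  have hmul : k * k⁻¹ = 1 := Matrix.mul_nonsing_inv k (by simp [h2])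
  refine ⟨?_, by simp [Matrix.det_nonsing_inv, h2]⟩
  calc (k⁻¹)ᵀ * lightConeLambda * k⁻¹
      = (k⁻¹)ᵀ * (kᵀ * lightConeLambda * k) * k⁻¹ := by rw [h1]
    _ = ((k * k⁻¹)ᵀ) * lightConeLambda * (k * k⁻¹) := by
        simp only [transpose_mul, Matrix.mul_assoc]
    _ = lightConeLambda := by rw [hmul]; simp

lemma frame_one (P : ℝ → Prop) (h1 : P 1) :
    (1 : Matrix (Fin 1 ⊕ Fin 3) (Fin 1 ⊕ Fin 3) ℂ) ∈ frameSet P := by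
  refine ⟨1, 0, 1, h1, K_one', ?_, ?_⟩
  · intro i; simp [Matrix.one_mulVec]
  · have h11 : (Matrix.of fun _ _ => ((1:ℝ) : ℂ)) = (1 : Matrix (Fin 1) (Fin 1) ℂ) := by
      ext i j; simp [Matrix.one_apply, Subsingleton.elim i j]
    have h21 : (Matrix.of fun (i : Fin 3) (_ : Fin 1) => ((0 : Fin 3 → ℂ) i)) = 0 := by
      ext i j; simp
    have h22 : ((1 : Matrix (Fin 3) (Fin 3) ℝ).map (fun r => (r : ℂ))) = 1 := by
      ext i j; simp [Matrix.one_apply, apply_ite]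
    rw [h11, h21, h22, Matrix.fromBlocks_one]

lemma frame_mul (P : ℝ → Prop) (hPmul : ∀ v w, P v → P w → P (v*w)) :
    ∀ A ∈ frameSet P, ∀ B ∈ frameSet P, A * B ∈ frameSet P := by
  rintro A ⟨v, c, k, hv, hk, hc, rfl⟩ B ⟨v', c', k', hv', hk', hc', rfl⟩
  refine ⟨v*v', (fun i => (v' : ℂ) * c i + ∑ l, (k i l : ℂ) * c' l), k*k',
    hPmul _ _ hv hv', K_mul' hk hk', ?_, ?_⟩
  · intro i
    have h1 : (∑ l, (k i l : ℂ) * c' l).re = ∑ l, k i l * (c' l).re := by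
      rw [Complex.re_sum]
      exact Finset.sum_congr rfl fun l _ => by simp [Complex.mul_re]
    simp only [Complex.add_re, Complex.mul_re, Complex.ofReal_re, Complex.ofReal_im,
      zero_mul, sub_zero, h1, hc i]
    simp only [fun l => hc' l]
    rw [← Matrix.mulVec_mulVec]
    simp only [Matrix.mulVec, Matrix.mul_apply, dotProduct, Fin.sum_univ_three,
      e₁_zero, e₁_one, e₁_two]
    ring
  · ext (i | i) (j | j) <;>
      simp [Matrix.mul_apply, Fintype.sum_sum_type, Matrix.fromBlocks, Fin.sum_univ_one,
        Matrix.mul_apply, mul_comm, Finset.mul_sum]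

lemma frame_inv (P : ℝ → Prop) (h0 : ∀ v, P v → v ≠ 0) (hPinv : ∀ v, P v → P v⁻¹) :
    ∀ A ∈ frameSet P, IsUnit A ∧ A⁻¹ ∈ frameSet P := by
  rintro A ⟨v, c, k, hv, hk, hc, rfl⟩
  have hv0 : v ≠ 0 := h0 v hv
  have hvC : (v : ℂ) ≠ 0 := by exact_mod_cast hv0
  obtain ⟨hk1, hk2⟩ := hk
  have hkk : k * k⁻¹ = 1 := Matrix.mul_nonsing_inv k (by simp [hk2])
  have hkk' : k⁻¹ * k = 1 := Matrix.nonsing_inv_mul k (by simp [hk2])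
  have hkc : (k.map (fun r : ℝ => (r : ℂ))) * (k⁻¹.map (fun r : ℝ => (r : ℂ))) = 1 := by
    rw [show ((fun r : ℝ => (r : ℂ))) = ⇑Complex.ofRealHom from rfl,
      ← Matrix.map_mul, hkk, Matrix.map_one _ (map_zero _) (map_one _)]
  have hvecd : (k.map (fun r : ℝ => (r : ℂ))).mulVec
      (fun i => -(v : ℂ)⁻¹ * (k⁻¹.map (fun r : ℝ => (r : ℂ))).mulVec c i)
      = fun i => -(v : ℂ)⁻¹ * c i := by
    have hd2 : (fun i => -(v : ℂ)⁻¹ * (k⁻¹.map (fun r : ℝ => (r : ℂ))).mulVec c i)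
        = (-(v : ℂ)⁻¹) • ((k⁻¹.map (fun r : ℝ => (r : ℂ))).mulVec c) := by
      funext l; simp [smul_eq_mul]
    rw [hd2, Matrix.mulVec_smul, Matrix.mulVec_mulVec, hkc, Matrix.one_mulVec]
    funext i; simp [smul_eq_mul]
  obtain ⟨d, hd⟩ : ∃ d : Fin 3 → ℂ,
      d = fun i => -(v : ℂ)⁻¹ * (k⁻¹.map (fun r : ℝ => (r : ℂ))).mulVec c i := ⟨_, rfl⟩
  have hMN : (Matrix.fromBlocks (Matrix.of fun (_ : Fin 1) (_ : Fin 1) => (v : ℂ)) 0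
      (Matrix.of fun (i : Fin 3) (_ : Fin 1) => c i) (k.map (fun r => (r : ℂ)))) *
      (Matrix.fromBlocks (Matrix.of fun (_ : Fin 1) (_ : Fin 1) => ((v⁻¹ : ℝ) : ℂ)) 0
      (Matrix.of fun (i : Fin 3) (_ : Fin 1) => d i) (k⁻¹.map (fun r => (r : ℂ)))) = 1 := by
    rw [Matrix.fromBlocks_multiply]
    have h1 : (Matrix.of fun _ _ => (v : ℂ)) * (Matrix.of fun _ _ => ((v⁻¹ : ℝ) : ℂ))
        + (0 : Matrix (Fin 1) (Fin 3) ℂ) * (Matrix.of fun i _ => d i)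
        = (1 : Matrix (Fin 1) (Fin 1) ℂ) := by
      ext i j
      simp [Matrix.mul_apply, Matrix.one_apply, Subsingleton.elim i j,
        Complex.ofReal_inv, mul_inv_cancel₀ hvC]
    have h2 : (Matrix.of fun (_ : Fin 1) (_ : Fin 1) => (v : ℂ)) * (0 : Matrix (Fin 1) (Fin 3) ℂ)
        + (0 : Matrix (Fin 1) (Fin 3) ℂ) * (k⁻¹.map (fun r : ℝ => (r : ℂ))) = 0 := by simp
    have h3 : (Matrix.of fun (i : Fin 3) (_ : Fin 1) => c i)
          * (Matrix.of fun (_ : Fin 1) (_ : Fin 1) => ((v⁻¹ : ℝ) : ℂ))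
        + (k.map (fun r : ℝ => (r : ℂ))) * (Matrix.of fun (i : Fin 3) (_ : Fin 1) => d i)
        = (0 : Matrix (Fin 3) (Fin 1) ℂ) := by
      have hvecd2 : (k.map (fun r : ℝ => (r : ℂ))).mulVec d = fun i => -(v : ℂ)⁻¹ * c i := by
        rw [hd]; exact hvecd
      ext i j
      have hsum : ∑ l, (k.map (fun r : ℝ => (r : ℂ))) i l * d l
          = (k.map (fun r : ℝ => (r : ℂ))).mulVec d i := rfl
      simp only [Matrix.add_apply, Matrix.mul_apply, Matrix.of_apply, Fin.sum_univ_one, hsum,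
        hvecd2, Matrix.zero_apply, Complex.ofReal_inv]
      ring
    have h4 : (Matrix.of fun (i : Fin 3) (_ : Fin 1) => c i) * (0 : Matrix (Fin 1) (Fin 3) ℂ)
        + (k.map (fun r : ℝ => (r : ℂ))) * (k⁻¹.map (fun r : ℝ => (r : ℂ))) = 1 := by
      simpa using hkc
    rw [h1, h2, h3, h4, Matrix.fromBlocks_one]
  have hNM := mul_eq_one_comm.mp hMN
  refine ⟨⟨⟨_, _, hMN, hNM⟩, rfl⟩, ?_⟩
  rw [Matrix.inv_eq_right_inv hMN]
  refine ⟨v⁻¹, d, k⁻¹, hPinv v hv, K_inv' ⟨hk1, hk2⟩, ?_, rfl⟩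
  intro i
  have hre : ((k⁻¹.map (fun r : ℝ => (r : ℂ))).mulVec c i).re
      = k⁻¹.mulVec (fun l => (c l).re) i := by
    simp only [Matrix.mulVec, dotProduct, Complex.re_sum]
    exact Finset.sum_congr rfl fun l _ => by simp [Complex.mul_re]
  have hcfun : (fun l => (c l).re) = k.mulVec e₁ - v • e₁ := by
    funext l; rw [hc l]; simp [smul_eq_mul]
  have hvv : k⁻¹.mulVec (k.mulVec e₁ - v • e₁) = e₁ - v • k⁻¹.mulVec e₁ := by
    rw [Matrix.mulVec_sub, Matrix.mulVec_smul, Matrix.mulVec_mulVec, hkk', Matrix.one_mulVec]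
  have hdre : (d i).re = -v⁻¹ * ((k⁻¹.map (fun r : ℝ => (r : ℂ))).mulVec c i).re := by
    rw [hd]
    simp [Complex.ofReal_inv, neg_mul, Complex.neg_re, Complex.re_ofReal_mul]
  rw [hdre, hre, hcfun, hvv]
  simp only [Pi.sub_apply, Pi.smul_apply, smul_eq_mul]
  field_simp
  ring

/-- The frame group `H′` of the tube over the light cone (block matrices
`[[v,0],[c,k]]` with `v ≠ 0`, `k ∈ K`, `Re c = k e₁ − v e₁`) is a subgroup of
`GL(4,ℂ)`, and so is the subset `H` where `v > 0`. -/
theorem frame_set_is_subgroup :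
    ((1 : Matrix (Fin 1 ⊕ Fin 3) (Fin 1 ⊕ Fin 3) ℂ) ∈ frameSet (fun v => v ≠ 0) ∧
      (∀ A ∈ frameSet (fun v => v ≠ 0), ∀ B ∈ frameSet (fun v => v ≠ 0),
        A * B ∈ frameSet (fun v => v ≠ 0)) ∧
      (∀ A ∈ frameSet (fun v => v ≠ 0), IsUnit A ∧ A⁻¹ ∈ frameSet (fun v => v ≠ 0))) ∧
    ((1 : Matrix (Fin 1 ⊕ Fin 3) (Fin 1 ⊕ Fin 3) ℂ) ∈ frameSet (fun v => 0 < v) ∧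
      (∀ A ∈ frameSet (fun v => 0 < v), ∀ B ∈ frameSet (fun v => 0 < v),
        A * B ∈ frameSet (fun v => 0 < v)) ∧
      (∀ A ∈ frameSet (fun v => 0 < v), IsUnit A ∧ A⁻¹ ∈ frameSet (fun v => 0 < v))) := by
  refine ⟨⟨frame_one _ one_ne_zero, frame_mul _ (fun v w hv hw => mul_ne_zero hv hw),
    frame_inv _ (fun v hv => hv) (fun v hv => inv_ne_zero hv)⟩,
    ⟨frame_one _ one_pos, frame_mul _ (fun v w hv hw => mul_pos hv hw),
    frame_inv _ (fun v hv => ne_of_gt hv) (fun v hv => inv_pos.mpr hv)⟩⟩
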